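/- Fix t ∈ (0,1) and define g(t,θ) = (1/2)(𝒥(1−t+2θ) − 𝒥(1−t) − 𝒥(1+2θ)) for θ > −(1−t)/2, where 𝒥(u) = u log u − u + 1. Then for every y < 0, the supremum over θ > −(1−t)/2 of θy − g(t,θ) equals (1/2)H(1−t | e^y), where H(x|p) = x log(x/p) + (1−x) log((1−x)/(1−p)); moreover the supremum is attained at θ = −(1/2)(1 − t/(1 − e^y)). -/

import Mathlib

open Real


lemma keyF (a c d : ℝ) (ha : 0 < a) (hac : a < c) (hA : 0 < a + d) :
    (c + d) * (Real.log (c + d) - Real.log c) ≤ (a + d) * (Real.log (a + d) - Real.log a) := by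
  set F : ℝ → ℝ := fun x => (x + d) * (Real.log (x + d) - Real.log x) with hF
  have hderiv : ∀ x ∈ Set.Icc a c, HasDerivAt F
      (1 * (Real.log (x + d) - Real.log x) + (x + d) * (1 / (x + d) - x⁻¹)) x := by
    intro x hx
    have hx0 : 0 < x := lt_of_lt_of_le ha hx.1
    have hxd : 0 < x + d := by linarith [hx.1]
    have h1 : HasDerivAt (fun x : ℝ => x + d) 1 x := (hasDerivAt_id x).add_const d
    have h2 : HasDerivAt (fun x : ℝ => Real.log (x + d)) (1 / (x + d)) x :=
      h1.log hxd.ne'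
    have h3 : HasDerivAt Real.log x⁻¹ x := Real.hasDerivAt_log hx0.ne'
    exact h1.mul (h2.sub h3)
  have hmono : AntitoneOn F (Set.Icc a c) := by
    apply antitoneOn_of_deriv_nonpos (convex_Icc a c)
    · exact fun x hx => (hderiv x hx).continuousAt.continuousWithinAt
    · intro x hx
      rw [interior_Icc] at hx
      exact ((hderiv x (Set.mem_Icc_of_Ioo hx)).differentiableAt).differentiableWithinAt
    · intro x hx
      rw [interior_Icc] at hx
      have hx0 : 0 < x := lt_trans ha hx.1
      have hxd : 0 < x + d := by linarith [hx.1]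
      rw [(hderiv x (Set.mem_Icc_of_Ioo hx)).deriv]
      have hu : 0 < (x + d) / x := div_pos hxd hx0
      have hlog : Real.log ((x + d) / x) ≤ (x + d) / x - 1 :=
        Real.log_le_sub_one_of_pos hu
      rw [Real.log_div hxd.ne' hx0.ne'] at hlog
      have he : (x + d) * (1 / (x + d) - x⁻¹) = 1 - (x + d) / x := by
        field_simp
      rw [he]
      have : (x + d) / x - 1 + (1 - (x + d) / x) = 0 := by ring
      nlinarith
  exact hmono (Set.left_mem_Icc.mpr hac.le) (Set.right_mem_Icc.mpr hac.le) hac.le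


/-- `𝒥(u) = u log u − u + 1` for `u > 0`, with `𝒥(0) = 1`. -/
noncomputable def J (u : ℝ) : ℝ := if u = 0 then 1 else u * log u - u + 1

/-- `g(t,θ) = (1/2)(𝒥(1−t+2θ) − 𝒥(1−t) − 𝒥(1+2θ))`. -/
noncomputable def g (t θ : ℝ) : ℝ := (1 / 2) * (J (1 - t + 2 * θ) - J (1 - t) - J (1 + 2 * θ))

/-- Entropy function `H(x|p) = x log(x/p) + (1−x) log((1−x)/(1−p))`. -/
noncomputable def entH (x p : ℝ) : ℝ := x * log (x / p) + (1 - x) * log ((1 - x) / (1 - p))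

lemma J_ne (u : ℝ) (hu : u ≠ 0) : J u = u * log u - u + 1 := by simp [J, hu]

/-- For `t ∈ (0,1)` and `y < 0`,
`sup_{θ > −(1−t)/2} (θ y − g(t,θ)) = (1/2) H(1−t | e^y)`, attained at
`θ = −(1/2)(1 − t/(1 − e^y))`. -/
theorem legendre_g (t y : ℝ) (ht : t ∈ Set.Ioo (0:ℝ) 1) (hy : y < 0) :
    IsGreatest {z | ∃ θ : ℝ, -(1 - t) / 2 < θ ∧ z = θ * y - g t θ}
        ((1 / 2) * entH (1 - t) (exp y)) ∧
      (-(1 / 2) * (1 - t / (1 - exp y))) * y - g t (-(1 / 2) * (1 - t / (1 - exp y)))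
        = (1 / 2) * entH (1 - t) (exp y) := by
  obtain ⟨ht0, ht1⟩ := ht
  have hp0 : 0 < exp y := exp_pos y
  have hp1 : exp y < 1 := exp_lt_one_iff.mpr hy
  set p := exp y with hp
  have h1p : 0 < 1 - p := by linarith
  set θs := -(1 / 2) * (1 - t / (1 - p)) with hθs
  set a := t * p / (1 - p) with hadef
  set c := t / (1 - p) with hcdef
  have ha0 : 0 < a := by rw [hadef]; positivity
  have hc0 : 0 < c := by rw [hcdef]; positivity
  have hca : c = a + t := by
    rw [hcdef, hadef]; field_simp; ring
  have hC : 1 + 2 * θs = c := by rw [hθs]; ring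
  have hA : 1 - t + 2 * θs = a := by linarith [hC, hca]
  have h1t : (0:ℝ) < 1 - t := by linarith
  have hyla : y = log a - log c := by
    rw [hadef, hcdef, log_div (by positivity) h1p.ne', log_mul ht0.ne' hp0.ne',
      log_div ht0.ne' h1p.ne', hp, log_exp]
    ring
  have hla : log a = log t + y - log (1 - p) := by
    rw [hadef, log_div (by positivity) h1p.ne', log_mul ht0.ne' hp0.ne', hp, log_exp]
  have hlc : log c = log t - log (1 - p) := by
    rw [hcdef, log_div ht0.ne' h1p.ne']
  have hent : entH (1 - t) p = (1 - t) * (log (1 - t) - y) + t * (log t - log (1 - p)) := by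
    rw [entH]
    have h1 : (1:ℝ) - (1 - t) = t := by ring
    rw [h1, log_div h1t.ne' hp0.ne', log_div ht0.ne' h1p.ne', hp, log_exp]
  clear_value p a c θs
  clear hθs hadef hcdef hp
  -- equality at θs
  have hθv : θs = (c - 1) / 2 := by linarith [hC]
  have heq : θs * y - g t θs = (1 / 2) * entH (1 - t) p := by
    rw [g, hA, hC, J_ne a ha0.ne', J_ne c hc0.ne', J_ne (1 - t) h1t.ne', hent, hla, hlc,
      hθv, hca]
    ring
  refine ⟨⟨⟨θs, by rw [neg_div]; linarith [hA ▸ ha0], heq.symm⟩, ?_⟩, heq⟩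
  rintro z ⟨θ, hθ, rfl⟩
  rw [← heq]
  obtain ⟨d, hd⟩ : ∃ d : ℝ, d = 2 * (θ - θs) := ⟨_, rfl⟩
  have hAd : 1 - t + 2 * θ = a + d := by rw [← hA, hd]; ring
  have hCd : 1 + 2 * θ = c + d := by rw [← hC, hd]; ring
  have hAd0 : 0 < a + d := by rw [← hAd]; linarith [hθ]
  have hCd0 : 0 < c + d := by rw [hca]; linarith
  have hkey := keyF a c d ha0 (by rw [hca]; linarith) hAd0
  have hθe : θ = θs + d / 2 := by rw [hd]; ring
  rw [g, g, hA, hC, hAd, hCd, J_ne a ha0.ne', J_ne c hc0.ne',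
    J_ne (a + d) hAd0.ne', J_ne (c + d) hCd0.ne', hθe, hyla]
  nlinarith [hkey]
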